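/- arXiv:2209.12887 — 4 statements merged into one kernel-verified Lean document; each statement's English description precedes it below -/
import Mathlib

section
/- Let H be a d-dimensional complex inner product space with orthonormal basis {π₁, …, π_d}, let Π be the orthogonal projection onto the span of {π₁, …, π_{d_g}} for some 1 ≤ d_g ≤ d, let U be a d×d unitary matrix, set x_j = Σ_{α=1}^{d} U_{α j} π_α for each j, and let ψ = (1/√d) Σ_{j=1}^{d} x_j ⊗ x_j in the inner product space H ⊗ H. Then there exist a unit vector ψ_g and a vector φ⊥ in H ⊗ H such that ψ = √(d_g/d) · ψ_g + φ⊥, (Π ⊗ id)(ψ_g) = ψ_g, (Π ⊗ id)(φ⊥) = 0, and ⟨ψ_g, φ⊥⟩ = 0; in particular ‖(Π ⊗ id)ψ‖² = d_g/d and Π ⊗ id acts as the rank-one projector |ψ_g⟩⟨ψ_g| on the two-dimensional subspace spanned by ψ_g and φ⊥. -/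
private lemma purification_key (d : ℕ) (U : Matrix (Fin d) (Fin d) ℂ)
    (hU : U ∈ Matrix.unitaryGroup (Fin d) ℂ) (α : Fin d) :
    ∑ β : Fin d, (∑ j, U α j * U β j) * (starRingEnd ℂ) (∑ j, U α j * U β j) = 1 := by
  have h1 : U.conjTranspose * U = 1 := hU.1
  have h2 : U * U.conjTranspose = 1 := hU.2
  set M := U * U.transpose with hM
  have hS : ∀ β, (∑ j, U α j * U β j) = M α β := by
    intro β; rw [hM, Matrix.mul_apply]; simp [Matrix.transpose_apply]
  have hconj : ∀ β, (starRingEnd ℂ) (M α β) = M.conjTranspose β α := by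
    intro β; rfl
  have hcc : U.transpose.conjTranspose = U.conjTranspose.transpose := by
    ext i j; rfl
  have hmid : U.transpose * U.transpose.conjTranspose = 1 := by
    have h3 : (U.conjTranspose * U).transpose = 1 := by rw [h1, Matrix.transpose_one]
    rw [Matrix.transpose_mul] at h3
    rw [hcc]; exact h3
  have hMM : M * M.conjTranspose = 1 := by
    rw [hM, Matrix.conjTranspose_mul, Matrix.mul_assoc, ← Matrix.mul_assoc U.transpose,
      hmid, Matrix.one_mul, h2]
  calc ∑ β, (∑ j, U α j * U β j) * (starRingEnd ℂ) (∑ j, U α j * U β j)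
      = ∑ β, M α β * M.conjTranspose β α := by simp_rw [hS, hconj]
    _ = (M * M.conjTranspose) α α := (Matrix.mul_apply).symm
    _ = 1 := by rw [hMM]; simp

/-- **purification lemma.** Working in coordinates with respect to the
orthonormal basis `{π_α}` of the `d`-dimensional space `H` (so that `H ⊗ H` is identified
with `EuclideanSpace ℂ (Fin d × Fin d)` via the orthonormal basis `{π_α ⊗ π_β}`): let `Π`
be the orthogonal projection onto the span of the first `d_g` basis vectors (so `Π ⊗ id`
zeroes the coordinates `(α, β)` with `α ≥ d_g`), let `U` be a `d × d` unitary, let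
`x_j = ∑_α U_{α j} π_α` and `ψ = (1/√d) ∑_j x_j ⊗ x_j`, i.e.
`ψ (α, β) = (1/√d) ∑_j U_{α j} U_{β j}`. Then there are `ψ_g`, `φ⊥` with `‖ψ_g‖ = 1`,
`ψ = √(d_g/d) • ψ_g + φ⊥`, `(Π ⊗ id) ψ_g = ψ_g`, `(Π ⊗ id) φ⊥ = 0`, `⟨ψ_g, φ⊥⟩ = 0`;
in particular `‖(Π ⊗ id) ψ‖² = d_g/d` and `Π ⊗ id` acts as the rank-one projector
`|ψ_g⟩⟨ψ_g|` on the span of `ψ_g` and `φ⊥`. -/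
theorem purification_of_maximally_mixed_state
    (d dg : ℕ) (hd : 0 < d) (hdg1 : 1 ≤ dg) (hdgd : dg ≤ d)
    (U : Matrix (Fin d) (Fin d) ℂ) (hU : U ∈ Matrix.unitaryGroup (Fin d) ℂ)
    (ψ : EuclideanSpace ℂ (Fin d × Fin d))
    (hψ : ∀ p : Fin d × Fin d,
      ψ p = ((1 / Real.sqrt d : ℝ) : ℂ) * ∑ j : Fin d, U p.1 j * U p.2 j)
    (Pid : EuclideanSpace ℂ (Fin d × Fin d) →ₗ[ℂ] EuclideanSpace ℂ (Fin d × Fin d))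
    (hPid : ∀ (v : EuclideanSpace ℂ (Fin d × Fin d)) (p : Fin d × Fin d),
      Pid v p = if (p.1 : ℕ) < dg then v p else 0) :
    ∃ ψg φperp : EuclideanSpace ℂ (Fin d × Fin d),
      ‖ψg‖ = 1 ∧
      ψ = ((Real.sqrt ((dg : ℝ) / d) : ℝ) : ℂ) • ψg + φperp ∧
      Pid ψg = ψg ∧
      Pid φperp = 0 ∧
      (inner ℂ ψg φperp : ℂ) = 0 ∧
      ‖Pid ψ‖ ^ 2 = (dg : ℝ) / d ∧
      (∀ a b : ℂ, Pid (a • ψg + b • φperp)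
          = (inner ℂ ψg (a • ψg + b • φperp) : ℂ) • ψg) := by
  have hdpos : (0 : ℝ) < d := by exact_mod_cast hd
  have hdgpos : (0 : ℝ) < dg := by exact_mod_cast lt_of_lt_of_le Nat.zero_lt_one hdg1
  have hratpos : (0 : ℝ) < (dg : ℝ) / d := div_pos hdgpos hdpos
  set c : ℝ := Real.sqrt ((dg : ℝ) / d) with hc
  have hcpos : 0 < c := Real.sqrt_pos.mpr hratpos
  have hcne : (c : ℂ) ≠ 0 := by exact_mod_cast (Complex.ofReal_ne_zero.mpr hcpos.ne')
  -- norm squared of Pid ψ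
  have hnormsq : ‖Pid ψ‖ ^ 2 = (dg : ℝ) / d := by
    have hps : ∀ p : Fin d × Fin d, ‖(Pid ψ) p‖ ^ 2 =
        if (p.1 : ℕ) < dg then (1 / d) * Complex.normSq (∑ j, U p.1 j * U p.2 j) else 0 := by
      intro p
      rw [hPid, hψ]
      by_cases h : (p.1 : ℕ) < dg
      · simp only [h, if_true]
        rw [← Complex.normSq_eq_norm_sq, Complex.normSq_mul,
          Complex.normSq_ofReal]
        congr 1
        rw [div_mul_div_comm, one_mul, Real.mul_self_sqrt hdpos.le]
      · simp [h]
    have hsum : ∑ p : Fin d × Fin d, ‖(Pid ψ) p‖ ^ 2 = (dg : ℝ) / d := by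
      rw [Finset.sum_congr rfl (fun p _ => hps p)]
      rw [Fintype.sum_prod_type]
      have hinner : ∀ α : Fin d,
          (∑ β : Fin d, Complex.normSq (∑ j, U α j * U β j)) = 1 := by
        intro α
        have hcx : ∑ β : Fin d,
            ((Complex.normSq (∑ j, U α j * U β j) : ℝ) : ℂ) = 1 := by
          have := purification_key d U hU α
          simp_rw [← Complex.mul_conj] at this ⊢
          exact this
        have := congrArg Complex.re hcx
        simpa using this
      have hrow : ∀ α : Fin d,
          (∑ β : Fin d, if ((α : ℕ) < dg) then
              (1 / (d:ℝ)) * Complex.normSq (∑ j, U α j * U β j) else 0)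
            = if ((α : ℕ) < dg) then (1 / (d:ℝ)) else 0 := by
        intro α
        by_cases h : (α : ℕ) < dg
        · simp only [h, if_true, ← Finset.mul_sum, hinner α, mul_one]
        · simp [h]
      rw [Finset.sum_congr rfl (fun α _ => hrow α)]
      rw [Fin.sum_univ_eq_sum_range (fun i => if i < dg then (1 / (d:ℝ)) else 0)]
      rw [← Finset.sum_filter]
      have hf : (Finset.range d).filter (fun i => i < dg) = Finset.range dg := by
        ext i; simp only [Finset.mem_filter, Finset.mem_range]
        constructor
        · rintro ⟨_, h⟩; exact h
        · intro h; exact ⟨lt_of_lt_of_le h hdgd, h⟩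
      rw [hf, Finset.sum_const, Finset.card_range, nsmul_eq_mul]
      field_simp
    have hnn : ‖Pid ψ‖ = Real.sqrt (∑ p : Fin d × Fin d, ‖(Pid ψ) p‖ ^ 2) :=
      EuclideanSpace.norm_eq _
    rw [hnn, Real.sq_sqrt (Finset.sum_nonneg fun p _ => sq_nonneg _), hsum]
  have hnorm : ‖Pid ψ‖ = c := by
    have h1 : ‖Pid ψ‖ = Real.sqrt (‖Pid ψ‖ ^ 2) := by
      rw [Real.sqrt_sq (norm_nonneg _)]
    rw [h1, hnormsq, hc]
  -- define ψg and φperp (opaquely, to avoid definitional unfolding)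
  obtain ⟨ψg, hψgdef⟩ : ∃ x : EuclideanSpace ℂ (Fin d × Fin d),
      x = ((c : ℂ)⁻¹) • Pid ψ := ⟨_, rfl⟩
  obtain ⟨φperp, hφdef⟩ : ∃ x : EuclideanSpace ℂ (Fin d × Fin d),
      x = ψ - (c : ℂ) • ψg := ⟨_, rfl⟩
  have hψg_apply : ∀ p : Fin d × Fin d, ψg p = (c : ℂ)⁻¹ * (Pid ψ) p := by
    intro p; rw [hψgdef]; rfl
  have hψg_zero : ∀ p : Fin d × Fin d, ¬ ((p.1 : ℕ) < dg) → ψg p = 0 := by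
    intro p h; rw [hψg_apply, hPid]; simp [h]
  have hφ_apply : ∀ p : Fin d × Fin d, φperp p = ψ p - (c : ℂ) * ψg p := by
    intro p; rw [hφdef]; rfl
  have hφ_zero : ∀ p : Fin d × Fin d, ((p.1 : ℕ) < dg) → φperp p = 0 := by
    intro p h
    rw [hφ_apply, hψg_apply, hPid, if_pos h, ← mul_assoc, mul_inv_cancel₀ hcne,
      one_mul, sub_self]
  have hPψg : Pid ψg = ψg := by
    refine PiLp.ext fun p => ?_
    rw [hPid]
    by_cases h : (p.1 : ℕ) < dg
    · rw [if_pos h]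
    · rw [if_neg h, hψg_zero p h]
  have hPφ : Pid φperp = 0 := by
    refine PiLp.ext fun p => ?_
    rw [hPid]
    by_cases h : (p.1 : ℕ) < dg
    · rw [if_pos h, hφ_zero p h]; rfl
    · rw [if_neg h]; rfl
  have hnormψg : ‖ψg‖ = 1 := by
    rw [hψgdef, norm_smul, hnorm]
    simp only [norm_inv, Complex.norm_real, Real.norm_eq_abs, abs_of_pos hcpos]
    exact inv_mul_cancel₀ hcpos.ne'
  have hinner0 : (inner ℂ ψg φperp : ℂ) = 0 := by
    rw [PiLp.inner_apply]
    refine Finset.sum_eq_zero fun p _ => ?_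
    by_cases h : (p.1 : ℕ) < dg
    · rw [hφ_zero p h]; exact inner_zero_right _
    · rw [hψg_zero p h]; exact inner_zero_left _
  refine ⟨ψg, φperp, hnormψg, ?_, hPψg, hPφ, hinner0, hnormsq, ?_⟩
  · rw [hφdef]; abel
  · intro a b
    have hlin : Pid (a • ψg + b • φperp) = a • ψg := by
      rw [map_add, map_smul, map_smul, hPψg, hPφ, smul_zero, add_zero]
    have hin : (inner ℂ ψg (a • ψg + b • φperp) : ℂ) = a := by
      rw [inner_add_right, inner_smul_right, inner_smul_right, hinner0, mul_zero,
        add_zero, inner_self_eq_norm_sq_to_K, hnormψg]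
      norm_num
    rw [hlin, hin]
end

section
/- Let A, B, C be finite-dimensional complex inner product spaces and let g : A → B and f : B → C be linear maps with f ∘ g = 0. Define the Laplacian Δ = g ∘ g† + f† ∘ f : B → B, where † denotes the adjoint. Then dim ker(Δ) = dim ker(f) − dim range(g). -/
open Module LinearMap

/-- **Hodge-theoretic identity for the Laplacian.** For linear maps
`g : A → B`, `f : B → C` between finite-dimensional complex inner product spaces with
`f ∘ g = 0`, the Laplacian `Δ = g ∘ g† + f† ∘ f : B → B` satisfies
`dim ker Δ = dim ker f − dim range g`. -/
theorem finrank_ker_laplacian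
    {A B C : Type*}
    [NormedAddCommGroup A] [InnerProductSpace ℂ A] [FiniteDimensional ℂ A]
    [NormedAddCommGroup B] [InnerProductSpace ℂ B] [FiniteDimensional ℂ B]
    [NormedAddCommGroup C] [InnerProductSpace ℂ C] [FiniteDimensional ℂ C]
    (g : A →ₗ[ℂ] B) (f : B →ₗ[ℂ] C) (hfg : f ∘ₗ g = 0) :
    Module.finrank ℂ
        (LinearMap.ker (g ∘ₗ LinearMap.adjoint g + LinearMap.adjoint f ∘ₗ f))
      = Module.finrank ℂ (LinearMap.ker f) - Module.finrank ℂ (LinearMap.range g) := by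
  have hrange : LinearMap.range g ≤ LinearMap.ker f := by
    rintro _ ⟨a, rfl⟩
    have : (f ∘ₗ g) a = 0 := by rw [hfg]; rfl
    simpa using this
  have hker : LinearMap.ker (g ∘ₗ LinearMap.adjoint g + LinearMap.adjoint f ∘ₗ f)
      = (LinearMap.range g)ᗮ ⊓ LinearMap.ker f := by
    ext x
    simp only [LinearMap.mem_ker, LinearMap.add_apply, LinearMap.comp_apply,
      Submodule.mem_inf, Submodule.mem_orthogonal]
    constructor
    · intro hx
      have h1 : (inner ℂ x (g (LinearMap.adjoint g x) + LinearMap.adjoint f (f x)) : ℂ) = 0 := by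
        rw [hx, inner_zero_right]
      rw [inner_add_right, ← LinearMap.adjoint_inner_left g (LinearMap.adjoint g x) x,
        LinearMap.adjoint_inner_right f x (f x)] at h1
      rw [inner_self_eq_norm_sq_to_K, inner_self_eq_norm_sq_to_K] at h1
      have h2 : (‖LinearMap.adjoint g x‖ : ℝ) ^ 2 + (‖f x‖ : ℝ) ^ 2 = 0 := by
        norm_cast at h1
        exact RCLike.ofReal_eq_zero.mp h1
      have hg : ‖LinearMap.adjoint g x‖ = 0 := by nlinarith [sq_nonneg ‖LinearMap.adjoint g x‖, sq_nonneg ‖f x‖, norm_nonneg (LinearMap.adjoint g x), norm_nonneg (f x)]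
      have hf : ‖f x‖ = 0 := by nlinarith [sq_nonneg ‖LinearMap.adjoint g x‖, sq_nonneg ‖f x‖, norm_nonneg (LinearMap.adjoint g x), norm_nonneg (f x)]
      have hg' : LinearMap.adjoint g x = 0 := norm_eq_zero.mp hg
      have hf' : f x = 0 := norm_eq_zero.mp hf
      refine ⟨?_, hf'⟩
      rintro _ ⟨a, rfl⟩
      rw [← LinearMap.adjoint_inner_right g, hg', inner_zero_right]
    · rintro ⟨ho, hf'⟩
      have hg' : LinearMap.adjoint g x = 0 := by
        rw [← inner_self_eq_zero (𝕜 := ℂ), LinearMap.adjoint_inner_right]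
        exact ho _ ⟨_, rfl⟩
      rw [hg', hf', map_zero, map_zero, add_zero]
  rw [hker]
  have := Submodule.finrank_add_inf_finrank_orthogonal (𝕜 := ℂ) hrange
  omega
end

section
/- For all natural numbers k and N with N ≥ k + 1, one has (∏_{l=0}^{k} (N − l)) · (k+1)^{k+1} ≥ N^{k+1} · (k+1)!. Equivalently, the fraction of (k+1)-tuples of indices from {1,…,N} having pairwise distinct entries, namely ∏_{l=0}^{k} (N − l) / N^{k+1}, is at least (k+1)!/(k+1)^{k+1}. -/
/-- For natural numbers `k`, `N` with `N ≥ k + 1`,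
`(∏_{l=0}^{k} (N − l)) · (k+1)^{k+1} ≥ N^{k+1} · (k+1)!`; equivalently, the fraction of
`(k+1)`-tuples from `{1,…,N}` with pairwise distinct entries,
`∏_{l=0}^{k} (N − l) / N^{k+1}`, is at least `(k+1)!/(k+1)^{k+1}`. -/
theorem distinct_tuple_fraction_lower_bound
    (k N : ℕ) (h : k + 1 ≤ N) :
    N ^ (k + 1) * Nat.factorial (k + 1)
        ≤ (∏ l ∈ Finset.range (k + 1), (N - l)) * (k + 1) ^ (k + 1) ∧
      (Nat.factorial (k + 1) : ℝ) / (k + 1 : ℝ) ^ (k + 1)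
        ≤ (∏ l ∈ Finset.range (k + 1), ((N : ℝ) - l)) / (N : ℝ) ^ (k + 1) := by
  have key : ∀ l ∈ Finset.range (k + 1), N * (k + 1 - l) ≤ (N - l) * (k + 1) := by
    intro l hl
    have hl' : l ≤ k := Finset.mem_range_succ_iff.mp hl
    calc N * (k + 1 - l) = N * (k + 1) - N * l := by rw [Nat.mul_sub]
      _ ≤ N * (k + 1) - l * (k + 1) := by
          apply Nat.sub_le_sub_left
          calc l * (k + 1) ≤ l * N := Nat.mul_le_mul_left l h
            _ = N * l := Nat.mul_comm l N
      _ = (N - l) * (k + 1) := by rw [Nat.sub_mul]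
  have hnat : N ^ (k + 1) * Nat.factorial (k + 1)
      ≤ (∏ l ∈ Finset.range (k + 1), (N - l)) * (k + 1) ^ (k + 1) := by
    have h1 := Finset.prod_le_prod' key
    rw [Finset.prod_mul_distrib, Finset.prod_mul_distrib, Finset.prod_const,
      Finset.prod_const, Finset.card_range] at h1
    have h2 : ∏ l ∈ Finset.range (k + 1), (k + 1 - l) = Nat.factorial (k + 1) := by
      rw [← Nat.descFactorial_eq_prod_range, Nat.descFactorial_self]
    rwa [h2] at h1
  refine ⟨hnat, ?_⟩
  have hN0 : (0 : ℝ) < (N : ℝ) := by exact_mod_cast (by omega : 0 < N)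
  have hNpos : (0 : ℝ) < (N : ℝ) ^ (k + 1) := pow_pos hN0 _
  have hkpos : (0 : ℝ) < ((k : ℝ) + 1) ^ (k + 1) := by positivity
  have hprod : ∏ l ∈ Finset.range (k + 1), ((N : ℝ) - l)
      = ((∏ l ∈ Finset.range (k + 1), (N - l) : ℕ) : ℝ) := by
    rw [Nat.cast_prod]
    refine Finset.prod_congr rfl fun l hl => ?_
    have hl' : l ≤ k := Finset.mem_range_succ_iff.mp hl
    rw [Nat.cast_sub (by omega)]
  rw [hprod, div_le_div_iff₀ hkpos hNpos]
  calc (Nat.factorial (k + 1) : ℝ) * (N : ℝ) ^ (k + 1)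
      = ((Nat.factorial (k + 1) * N ^ (k + 1) : ℕ) : ℝ) := by push_cast; ring
    _ ≤ (((∏ l ∈ Finset.range (k + 1), (N - l)) * (k + 1) ^ (k + 1) : ℕ) : ℝ) := by
        exact_mod_cast (by linarith [hnat] : Nat.factorial (k+1) * N ^ (k+1)
          ≤ (∏ l ∈ Finset.range (k + 1), (N - l)) * (k + 1) ^ (k + 1))
    _ = ((∏ l ∈ Finset.range (k + 1), (N - l) : ℕ) : ℝ) * ((k : ℝ) + 1) ^ (k + 1) := by
        push_cast; ring
end

section
/- Consider the real vector space ℝ⁶ with coordinates indexed by the edges (AB, BC, CD, AD, AX, BX) and ℝ⁵ with coordinates indexed by the vertices (A, B, C, D, X). Let ∂₁ : ℝ⁶ → ℝ⁵ be the linear map sending the edge basis vectors AB ↦ B − A, BC ↦ C − B, CD ↦ D − C, AD ↦ D − A, AX ↦ X − A, BX ↦ X − B, and let ∂₂ : ℝ → ℝ⁶ be the linear map sending the triangle basis vector ABX ↦ AB − AX + BX, i.e. to the vector (1, 0, 0, 0, −1, 1). Then the kernel of the combinatorial Laplacian Δ₁ = ∂₂ ∘ ∂₂ᵀ + ∂₁ᵀ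 ∘ ∂₁ : ℝ⁶ → ℝ⁶ is one-dimensional and is spanned by the vector v = (2, 3, 3, −3, 1, −1), i.e. by 3·(AB + BC + CD − AD) − ∂₂(ABX). -/
private lemma cons_val_five' {α : Type*} (x : α) (u : Fin 5 → α) :
    Matrix.vecCons x u 5 = u 4 := rfl

/-- With edges ordered `(AB, BC, CD, AD, AX, BX)` and vertices
`(A, B, C, D, X)`, let `∂₁ : ℝ⁶ → ℝ⁵` be the boundary map `AB ↦ B − A`, `BC ↦ C − B`,
`CD ↦ D − C`, `AD ↦ D − A`, `AX ↦ X − A`, `BX ↦ X − B` and `∂₂ : ℝ → ℝ⁶` the map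
`ABX ↦ AB − AX + BX = (1,0,0,0,−1,1)`. The kernel of the combinatorial Laplacian
`Δ₁ = ∂₂ ∘ ∂₂ᵀ + ∂₁ᵀ ∘ ∂₁` is one-dimensional, spanned by
`v = (2,3,3,−3,1,−1) = 3(AB + BC + CD − AD) − ∂₂(ABX)`. -/
theorem kernel_of_combinatorial_laplacian_example
    (D1 : Matrix (Fin 5) (Fin 6) ℝ) (D2 : Matrix (Fin 6) (Fin 1) ℝ)
    (hD1 : D1 = !![-1, 0, 0, -1, -1, 0;
                    1, -1, 0, 0, 0, -1;
                    0, 1, -1, 0, 0, 0;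
                    0, 0, 1, 1, 0, 0;
                    0, 0, 0, 0, 1, 1])
    (hD2 : D2 = !![1; 0; 0; 0; -1; 1]) :
    LinearMap.ker (D2 * D2.transpose + D1.transpose * D1).mulVecLin
        = Submodule.span ℝ {![2, 3, 3, -3, 1, -1]} ∧
      Module.finrank ℝ
          (LinearMap.ker (D2 * D2.transpose + D1.transpose * D1).mulVecLin) = 1 := by
  have hL : D2 * D2.transpose + D1.transpose * D1 =
      !![3, -1, 0, 1, 0, 0;
         -1, 2, -1, 0, 0, 1;
         0, -1, 2, 1, 0, 0;
         1, 0, 1, 2, 1, 0;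
         0, 0, 0, 1, 3, 0;
         0, 1, 0, 0, 0, 3] := by
    subst hD1 hD2
    ext i j
    fin_cases i <;> fin_cases j <;>
      norm_num [Matrix.mul_apply, Fin.sum_univ_succ, Matrix.transpose]
  rw [hL]
  have hker : LinearMap.ker
      ((!![3, -1, 0, 1, 0, 0;
         -1, 2, -1, 0, 0, 1;
         0, -1, 2, 1, 0, 0;
         1, 0, 1, 2, 1, 0;
         0, 0, 0, 1, 3, 0;
         0, 1, 0, 0, 0, 3] : Matrix (Fin 6) (Fin 6) ℝ)).mulVecLin
      = Submodule.span ℝ {![2, 3, 3, -3, 1, -1]} := by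
    apply le_antisymm
    · intro x hx
      rw [LinearMap.mem_ker, Matrix.mulVecLin_apply] at hx
      have h0 := congrFun hx 0
      have h1 := congrFun hx 1
      have h2 := congrFun hx 2
      have h3 := congrFun hx 3
      have h4 := congrFun hx 4
      have h5 := congrFun hx 5
      simp [Matrix.mulVec, dotProduct, Fin.sum_univ_six, cons_val_five'] at h0 h1 h2 h3 h4 h5
      rw [Submodule.mem_span_singleton]
      refine ⟨x 4, funext fun i => ?_⟩
      fin_cases i <;> simp [cons_val_five'] <;> linarith
    · rw [Submodule.span_le, Set.singleton_subset_iff]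
      rw [SetLike.mem_coe, LinearMap.mem_ker, Matrix.mulVecLin_apply]
      funext i
      fin_cases i <;>
        simp [Matrix.mulVec, dotProduct, Fin.sum_univ_six, cons_val_five'] <;> norm_num
  refine ⟨hker, ?_⟩
  rw [hker]
  rw [finrank_span_singleton]
  intro h
  have := congrFun h 0
  norm_num at this
end
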